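/- Let k ≥ 3 and let G be a finite simple graph. Let G' be the simple graph whose vertex set is the disjoint union of V(G) and a set U of k new vertices, where two vertices of V(G) are adjacent in G' iff they are adjacent in G, the vertices of U are pairwise adjacent, and every vertex of U is adjacent to every vertex of V(G). Then G is k-colorable if and only if the vertex set of G' can be partitioned into k parts each of which induces an acyclic subgraph of G' (i.e., there exists a function f from V(G') to a set of k colors such that for each color c, the subgraph of G' induced by f⁻¹(c) contains no cycle). -/

import Mathlib

open SimpleGraph Walk

section AuxLemmas

lemma triangle_not_acyclic' {W : Type*} {H : SimpleGraph W} {a b c : W}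
    (hab : H.Adj a b) (hbc : H.Adj b c) (hca : H.Adj c a) : ¬ H.IsAcyclic := by
  intro hH
  refine hH (Walk.cons hab (Walk.cons hbc (Walk.cons hca Walk.nil))) ?_
  rw [Walk.cons_isCycle_iff]
  have h1 := hab.ne
  have h2 := hbc.ne
  have h3 := hca.ne
  have h4 : a ≠ c := Ne.symm h3
  refine ⟨?_, ?_⟩
  · simp [Walk.isPath_def, h2, h3, Ne.symm h3, Ne.symm h1]
  · simp only [Walk.edges_cons, Walk.edges_nil, List.mem_cons, List.not_mem_nil, or_false,
      Sym2.eq_iff]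
    tauto


lemma star_acyclic' {W : Type*} {H : SimpleGraph W} (z : W)
    (hz : ∀ a b, H.Adj a b → a = z ∨ b = z) : H.IsAcyclic := by
  intro v p hp
  have h3 := hp.three_le_length
  cases p with
  | nil => exact hp.ne_nil rfl
  | cons h q =>
    cases q with
    | nil => simp at h3
    | cons h' q' =>
      cases q' with
      | nil => simp at h3
      | cons h'' q'' =>
        rename_i b c d
        have htail : (Walk.cons h (Walk.cons h' (Walk.cons h'' q''))).support.tail
            = b :: c :: q''.support := by
          simp [Walk.support_cons]
        have hnd : (b :: c :: q''.support).Nodup := by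
          have := hp.2
          rwa [htail] at this
        have hb : b ∉ c :: q''.support := (List.nodup_cons.mp hnd).1
        have hc : c ∉ q''.support := (List.nodup_cons.mp (List.nodup_cons.mp hnd).2).1
        have hvmem : v ∈ q''.support := q''.end_mem_support
        have hdmem : d ∈ q''.support := q''.start_mem_support
        rcases hz v b h with rfl | rfl
        · rcases hz b c h' with rfl | rfl
          · exact hb (List.mem_cons_of_mem _ hvmem)
          · exact hc hvmem
        · rcases hz c d h'' with rfl | rfl
          · exact hb List.mem_cons_self
          · exact hb (List.mem_cons_of_mem _ hdmem)


lemma no_odd_closed_walk' {W : Type*} {H : SimpleGraph W} (hH : H.IsAcyclic) :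
    ∀ n : ℕ, ∀ (u : W) (w : H.Walk u u), w.length = n → ¬ Odd n := by
  classical
  intro n
  induction n using Nat.strong_induction_on with
  | _ n IH =>
    intro u w hlen hodd
    cases w with
    | nil =>
      simp only [Walk.length_nil] at hlen
      rcases hodd with ⟨m, hm⟩; omega
    | cons h q =>
      rename_i x
      -- h : H.Adj u x, q : H.Walk x u, length q + 1 = n
      have hbridge : H.IsBridge s(u, x) := (isAcyclic_iff_forall_adj_isBridge.mp hH) h
      have hnr : ¬ (H \ SimpleGraph.fromEdgeSet {s(u, x)}).Reachable u x :=
        SimpleGraph.isBridge_iff.mp hbridge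
      have hqlen : q.length + 1 = n := by simpa using hlen
      by_cases hmem : s(u, x) ∈ q.edges
      · have hqpos : 0 < q.length := by
          rw [← Walk.length_edges]
          exact List.length_pos_iff.mpr (List.ne_nil_of_mem hmem)
        have hu : u ∈ q.support := q.fst_mem_support_of_mem_edges hmem
        have hsplit := q.take_spec hu
        have hlens : (q.takeUntil u hu).length + (q.dropUntil u hu).length = q.length := by
          rw [← Walk.length_append, hsplit]
        by_cases hb2 : (q.dropUntil u hu).length = 0
        · -- q has u only at its end
          have hq1 : q.dropUntil u hu = Walk.nil := Walk.nil_iff_eq_nil.mp (Walk.length_eq_zero_iff.mp hb2)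
          have hcount : q.support.count u = 1 := by
            conv_lhs => rw [← hsplit, hq1, Walk.append_nil]
            exact q.count_support_takeUntil_eq_one hu
          -- reverse q
          have hne : u ≠ x := h.ne
          obtain ⟨y, hy, r, hr⟩ := Walk.exists_eq_cons_of_ne hne q.reverse
          have hrsupp : q.reverse.support = u :: r.support := by rw [hr]; simp
          have hucount : (u :: r.support).count u = 1 := by
            rw [← hrsupp, Walk.support_reverse, List.count_reverse, hcount]
          have hur : u ∉ r.support := by
            have := (List.count_cons_self (a := u) (l := r.support)) ▸ hucount
            simp [List.count_cons] at hucount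
            exact List.count_eq_zero.mp (by omega)
          have hmem' : s(u, x) ∈ q.reverse.edges := by
            rw [Walk.edges_reverse, List.mem_reverse]; exact hmem
          rw [hr, Walk.edges_cons] at hmem'
          rcases List.mem_cons.mp hmem' with heq | hmem''
          · have hxy : x = y := Sym2.congr_right.mp heq
            subst hxy
            -- r : Walk x x with length n - 2
            have hrlen : r.length = n - 2 := by
              have : q.reverse.length = q.length := Walk.length_reverse q
              rw [hr] at this
              simp at this
              omega
            exact IH (n-2) (by omega) x r hrlen (by rcases hodd with ⟨m, hm⟩; refine ⟨m - 1, ?_⟩; omega)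
          · exact hur (r.fst_mem_support_of_mem_edges hmem'')
        · -- both pieces shorter
          have hodd2 : Odd ((q.takeUntil u hu).length + 1) ∨ Odd ((q.dropUntil u hu).length) := by
            rcases hodd with ⟨m, hm⟩
            rcases Nat.even_or_odd ((q.takeUntil u hu).length + 1) with he | ho
            · right
              rcases he with ⟨a, ha⟩
              exact ⟨m - a, by omega⟩
            · left; exact ho
          rcases hodd2 with ho | ho
          · exact IH _ (by omega) u (Walk.cons h (q.takeUntil u hu)) (by simp) ho
          · exact IH _ (by omega) u (q.dropUntil u hu) rfl ho
      · -- bridge contradiction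
        have hdis : ∀ e ∈ q.edges, e ∉ ({s(u, x)} : Set (Sym2 W)) := by
          intro e he hes
          rw [Set.mem_singleton_iff] at hes
          exact hmem (hes ▸ he)
        have : (H.deleteEdges {s(u, x)}).Reachable x u := ⟨q.toDeleteEdges _ hdis⟩
        exact hnr (this.symm)

lemma acyclic_colorable' {W : Type*} {H : SimpleGraph W} (hH : H.IsAcyclic) :
    H.Colorable 2 := by
  classical
  have hreach : ∀ v : W, H.Reachable v (Quot.out (H.connectedComponentMk v)) := by
    intro v
    apply ConnectedComponent.exact
    exact (Quot.out_eq (r := H.Reachable) (H.connectedComponentMk v)).symm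
  set rep : W → W := fun v => Quot.out (H.connectedComponentMk v) with hrep
  have walkTo : ∀ v : W, H.Walk v (rep v) := fun v => (hreach v).some
  refine ⟨Coloring.mk (fun v => ⟨(walkTo v).length % 2, Nat.mod_lt _ (by norm_num)⟩) ?_⟩
  intro v w hadj
  have hcomp : rep v = rep w := by
    simp only [hrep]
    rw [ConnectedComponent.connectedComponentMk_eq_of_adj hadj]
  -- closed walk at rep v
  have hclosed := no_odd_closed_walk' hH _ (rep v)
      ((walkTo v).reverse.append (Walk.cons hadj ((walkTo w).copy rfl hcomp.symm))) rfl
  intro hcv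
  apply hclosed
  have hlen : ((walkTo v).reverse.append
      (Walk.cons hadj ((walkTo w).copy rfl hcomp.symm))).length
      = (walkTo v).length + (walkTo w).length + 1 := by
    simp [Walk.length_append, Walk.length_reverse, Walk.length_copy]
    omega
  rw [hlen]
  have : (walkTo v).length % 2 = (walkTo w).length % 2 := by
    have := congrArg (fun x : Fin 2 => (x : ℕ)) hcv
    simpa using this
  refine ⟨(walkTo v).length / 2 + (walkTo w).length / 2 + (walkTo v).length % 2, by omega⟩

end AuxLemmas

/-- The graph obtained from `G` by adding `k` new universal vertices (the set `U`), where
each new vertex is adjacent to every vertex of `G` and the new vertices are pairwise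
adjacent. -/
def SimpleGraph.addUniversal {V : Type*} (G : SimpleGraph V) (k : ℕ) :
    SimpleGraph (V ⊕ Fin k) where
  Adj x y :=
    match x, y with
    | Sum.inl u, Sum.inl v => G.Adj u v
    | Sum.inl _, Sum.inr _ => True
    | Sum.inr _, Sum.inl _ => True
    | Sum.inr i, Sum.inr j => i ≠ j
  symm := by
    constructor
    rintro (u | i) (v | j) h
    · exact G.adj_symm h
    · trivial
    · trivial
    · exact Ne.symm h
  loopless := by
    constructor
    rintro (u | i) h
    · exact G.ne_of_adj h rfl
    · exact h rfl

/-- Let `k ≥ 3` and let `G` be a finite simple graph. Then `G` is `k`-colorable if and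
only if the vertex set of `G'` (obtained from `G` by adding `k` pairwise-adjacent
universal vertices) can be partitioned into `k` parts each inducing an acyclic subgraph. -/
theorem colorable_iff_acyclic_partition {V : Type*} [Fintype V]
    (k : ℕ) (hk : 3 ≤ k) (G : SimpleGraph V) :
    G.Colorable k ↔
      ∃ f : (V ⊕ Fin k) → Fin k,
        ∀ col : Fin k, ((G.addUniversal k).induce (f ⁻¹' {col})).IsAcyclic := by
  classical
  constructor
  · rintro ⟨c⟩
    refine ⟨Sum.elim c id, fun col => ?_⟩
    have hz : (Sum.inr col : V ⊕ Fin k) ∈ Sum.elim c id ⁻¹' {col} := rfl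
    apply star_acyclic' (⟨Sum.inr col, hz⟩ : (Sum.elim c id ⁻¹' {col} : Set (V ⊕ Fin k)))
    rintro ⟨a, ha⟩ ⟨b, hb⟩ hadj
    have hadj' : (G.addUniversal k).Adj a b := hadj
    match a, b with
    | Sum.inl u, Sum.inl v =>
      have h1 : c u = col := ha
      have h2 : c v = col := hb
      exact absurd (h1.trans h2.symm) (c.valid hadj')
    | Sum.inl u, Sum.inr i =>
      right
      exact Subtype.ext (congrArg Sum.inr (hb : (i : Fin k) = col))
    | Sum.inr i, Sum.inl u =>
      left
      exact Subtype.ext (congrArg Sum.inr (ha : (i : Fin k) = col))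
    | Sum.inr i, Sum.inr j =>
      left
      exact Subtype.ext (congrArg Sum.inr (ha : (i : Fin k) = col))
  · rintro ⟨f, hf⟩
    set nU : Fin k → ℕ :=
      fun col => (Finset.univ.filter fun i : Fin k => f (Sum.inr i) = col).card with hnU
    -- adjacency helpers in the induced parts
    have adjP : ∀ (col : Fin k) (x y : V ⊕ Fin k) (hx : f x = col) (hy : f y = col),
        (G.addUniversal k).Adj x y →
        ((G.addUniversal k).induce (f ⁻¹' {col})).Adj ⟨x, hx⟩ ⟨y, hy⟩ := fun _ _ _ _ _ h => h
    -- no part has 3 U-vertices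
    have hU2 : ∀ col, nU col ≤ 2 := by
      intro col
      by_contra hgt
      push_neg at hgt
      obtain ⟨i, hi, j, hj, l, hl, hij, hil, hjl⟩ := Finset.two_lt_card.mp hgt
      rw [Finset.mem_filter] at hi hj hl
      exact triangle_not_acyclic'
        (adjP col _ _ hi.2 hj.2 (by exact hij))
        (adjP col _ _ hj.2 hl.2 (by exact hjl))
        (adjP col _ _ hl.2 hi.2 (by exact hil.symm)) (hf col)
    -- a part containing a G-vertex has at most one U-vertex
    have hA : ∀ v : V, nU (f (Sum.inl v)) ≤ 1 := by
      intro v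
      by_contra hgt
      push_neg at hgt
      obtain ⟨i, hi, j, hj, hij⟩ := Finset.one_lt_card.mp hgt
      rw [Finset.mem_filter] at hi hj
      exact triangle_not_acyclic'
        (adjP _ _ _ hi.2 hj.2 (by exact hij))
        (adjP _ _ _ hj.2 rfl trivial)
        (adjP _ _ _ rfl hi.2 trivial) (hf _)
    -- parts with a U-vertex have independent G-part
    have hS_indep : ∀ (col : Fin k) (i : Fin k), f (Sum.inr i) = col →
        ∀ v w : V, f (Sum.inl v) = col → f (Sum.inl w) = col → ¬ G.Adj v w := by
      intro col i hi v w hv hw hadj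
      exact triangle_not_acyclic'
        (adjP col _ _ hv hw (by exact hadj))
        (adjP col _ _ hw hi trivial)
        (adjP col _ _ hi hv trivial) (hf col)
    -- each part's G-part induces a forest in G
    have hGpart : ∀ col : Fin k, (G.induce {v : V | f (Sum.inl v) = col}).IsAcyclic := by
      intro col u p hp
      let φ : G.induce {v : V | f (Sum.inl v) = col} →g
          (G.addUniversal k).induce (f ⁻¹' {col}) :=
        ⟨fun x => ⟨Sum.inl x.1, x.2⟩, fun h => h⟩
      have hinj : Function.Injective φ := by
        rintro ⟨x, hx⟩ ⟨y, hy⟩ hxy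
        have h' : (Sum.inl x : V ⊕ Fin k) = Sum.inl y := congrArg Subtype.val hxy
        exact Subtype.ext (Sum.inl.inj h')
      exact hf col (p.map φ) (hp.map hinj)
    -- 2-colorings of the forests
    have gchoice : ∀ col : Fin k,
        (G.induce {v : V | f (Sum.inl v) = col}).Coloring (Fin 2) :=
      fun col => (acyclic_colorable' (hGpart col)).some
    set gg : Fin k → V → Fin 2 := fun col v =>
      if h : f (Sum.inl v) = col then gchoice col ⟨v, h⟩ else 0 with hgg
    have gg_valid : ∀ (col : Fin k) (v w : V), f (Sum.inl v) = col →
        f (Sum.inl w) = col → G.Adj v w → gg col v ≠ gg col w := by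
      intro col v w hv hw hadj
      have := (gchoice col).valid (v := ⟨v, hv⟩) (w := ⟨w, hw⟩) (by exact hadj)
      simpa [hgg, hv, hw] using this
    -- counting: #(parts with 0 U-vertices) = #(parts with 2 U-vertices)
    have hsum : ∑ col : Fin k, nU col = k := by
      have := Finset.card_eq_sum_card_fiberwise
        (f := fun i : Fin k => f (Sum.inr i)) (s := Finset.univ) (t := Finset.univ)
        (fun i _ => Finset.mem_univ _)
      simpa using this.symm
    have hcards : (Finset.univ.filter fun col : Fin k => nU col = 0).card
        = (Finset.univ.filter fun col : Fin k => nU col = 2).card := by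
      have hpt : ∑ col : Fin k, (nU col + if nU col = 0 then 1 else 0)
          = ∑ col : Fin k, (1 + if nU col = 2 then 1 else 0) :=
        Finset.sum_congr rfl (fun col _ => by have := hU2 col; split_ifs <;> omega)
      rw [Finset.sum_add_distrib, Finset.sum_add_distrib, hsum] at hpt
      rw [Finset.card_filter, Finset.card_filter]
      simpa using hpt
    have hcard_sub : Fintype.card {col : Fin k // nU col = 0}
        = Fintype.card {col : Fin k // nU col = 2} := by
      rw [Fintype.card_subtype, Fintype.card_subtype]
      exact hcards
    let σ : {col : Fin k // nU col = 0} ≃ {col : Fin k // nU col = 2} :=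
      Fintype.equivOfCardEq hcard_sub
    set σ' : Fin k → Fin k := fun col =>
      if h : nU col = 0 then (σ ⟨col, h⟩).1 else col with hσ'
    have hσ'2 : ∀ col, nU col = 0 → nU (σ' col) = 2 := by
      intro col h
      simp only [hσ', dif_pos h]
      exact (σ ⟨col, h⟩).2
    have hσ'inj : ∀ col col', nU col = 0 → nU col' = 0 → σ' col = σ' col' → col = col' := by
      intro col col' h h' heq
      simp only [hσ', dif_pos h, dif_pos h'] at heq
      have := σ.injective (Subtype.ext heq)
      exact congrArg Subtype.val this
    -- the final coloring
    set c : V → Fin k := fun v =>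
      if nU (f (Sum.inl v)) = 0 then
        (if gg (f (Sum.inl v)) v = 0 then f (Sum.inl v) else σ' (f (Sum.inl v)))
      else f (Sum.inl v) with hc
    -- c v is either f (inl v), or (σ' applied when nU = 0)
    have hcv : ∀ v : V, c v = f (Sum.inl v) ∨
        (nU (f (Sum.inl v)) = 0 ∧ c v = σ' (f (Sum.inl v))) := by
      intro v
      by_cases h0 : nU (f (Sum.inl v)) = 0
      · by_cases h1 : gg (f (Sum.inl v)) v = 0
        · left; simp [hc, h0, h1]
        · right; exact ⟨h0, by simp [hc, h0, h1]⟩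
      · left; simp [hc, h0]
    refine ⟨Coloring.mk c ?_⟩
    intro v w hadj
    intro hceq
    by_cases hab : f (Sum.inl v) = f (Sum.inl w)
    · -- same part
      have h0 : nU (f (Sum.inl v)) = 0 := by
        by_contra h0
        have h1 : 0 < nU (f (Sum.inl v)) := by omega
        obtain ⟨i, hi⟩ := Finset.card_pos.mp h1
        rw [Finset.mem_filter] at hi
        exact hS_indep _ i hi.2 v w rfl hab.symm hadj
      have hggne : gg (f (Sum.inl v)) v ≠ gg (f (Sum.inl v)) w :=
        gg_valid _ v w rfl hab.symm hadj
      have hne2 : f (Sum.inl v) ≠ σ' (f (Sum.inl v)) := by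
        intro h
        have := hσ'2 _ h0
        rw [← h] at this
        omega
      have hcw : c w = if gg (f (Sum.inl v)) w = 0 then f (Sum.inl v)
          else σ' (f (Sum.inl v)) := by
        simp only [hc, ← hab, h0, if_pos]
      have hcv' : c v = if gg (f (Sum.inl v)) v = 0 then f (Sum.inl v)
          else σ' (f (Sum.inl v)) := by
        simp only [hc, h0, if_pos]
      by_cases g1 : gg (f (Sum.inl v)) v = 0 <;> by_cases g2 : gg (f (Sum.inl v)) w = 0
      · exact hggne (g1.trans g2.symm)
      · rw [hcv', hcw, if_pos g1, if_neg g2] at hceq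
        exact hne2 hceq
      · rw [hcv', hcw, if_neg g1, if_pos g2] at hceq
        exact hne2 hceq.symm
      · apply hggne
        have e1 : gg (f (Sum.inl v)) v = 1 := by omega
        have e2 : gg (f (Sum.inl v)) w = 1 := by omega
        rw [e1, e2]
    · -- different parts
      rcases hcv v with h1 | ⟨h0v, h1⟩ <;> rcases hcv w with h2 | ⟨h0w, h2⟩
      · exact hab (h1 ▸ h2 ▸ hceq)
      · rw [h1, h2] at hceq
        have := hσ'2 _ h0w
        rw [← hceq] at this
        have := hA v
        omega
      · rw [h1, h2] at hceq
        have := hσ'2 _ h0v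
        rw [hceq] at this
        have := hA w
        omega
      · rw [h1, h2] at hceq
        exact hab (hσ'inj _ _ h0v h0w hceq)
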